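/- arXiv:2009.01358 — 2 statements merged into one kernel-verified Lean document; each statement's English description precedes it below -/
import Mathlib

section
/- Optimal substructure: if (τ₀,…,τ_m, s, t) minimizes V over all segmentations of {1,…,t} whose second-to-last change point is s, and m ≥ 1, then (τ₀,…,τ_m, s) minimizes V over all segmentations of {1,…,s} whose second-to-last change point is τ_m. -/
def SegSet (T : ℕ) : Set (List ℕ) :=
  {l | l.Chain' (· < ·) ∧ l.head? = some 1 ∧ l.getLast? = some T}

/-- `Segment(i,j)`: segmentations of `{1,…,j}` whose second-to-last change
point is `i`. -/
def SegEnd (i j : ℕ) : Set (List ℕ) :=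
  {l | l ∈ SegSet j ∧ ∃ l₀ : List ℕ, l = l₀ ++ [i, j]}

noncomputable def tripleCosts (c : ℕ → ℕ → ℕ → ℝ) : List ℕ → ℝ
  | a :: b :: d :: rest => c a b d + tripleCosts c (b :: d :: rest)
  | _ => 0

noncomputable def V (c : ℕ → ℕ → ℕ → ℝ) (β : ℝ) (l : List ℕ) : ℝ :=
  tripleCosts c l + β * ((l.length - 2 : ℕ) : ℝ)

lemma tc_app (c : ℕ → ℕ → ℕ → ℝ) :
    ∀ (l : List ℕ) (a b d : ℕ),
      tripleCosts c (l ++ [a, b, d]) = tripleCosts c (l ++ [a, b]) + c a b d := by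
  intro l
  induction l with
  | nil => intro a b d; simp [tripleCosts]
  | cons x l ih =>
    intro a b d
    cases l with
    | nil => simp [tripleCosts]
    | cons y l' =>
      cases l' with
      | nil => simp [tripleCosts]; ring
      | cons w r =>
        have hih := ih a b d
        simp only [List.cons_append] at hih ⊢
        simp only [tripleCosts]
        rw [hih]; ring

lemma V_app (c : ℕ → ℕ → ℕ → ℝ) (β : ℝ) (l : List ℕ) (a b d : ℕ) :
    V c β (l ++ [a, b, d]) = V c β (l ++ [a, b]) + (c a b d + β) := by
  have h1 : (l ++ [a, b, d]).length - 2 = l.length + 1 := by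
    simp [List.length_append]
  have h2 : (l ++ [a, b]).length - 2 = l.length := by
    simp [List.length_append]
  simp only [V, tc_app, h1, h2]
  push_cast
  ring

/-- Optimal substructure: if `(τ₀,…,τ_m,s,t)` (with `m ≥ 1`, i.e. `l₀ ≠ []`)
minimizes `V` over `Segment(s,t)`, then `(τ₀,…,τ_m,s)` minimizes `V` over
`Segment(τ_m,s)`. -/
theorem stmt2 (c : ℕ → ℕ → ℕ → ℝ) (β : ℝ) (s t τm : ℕ)
    (l₀ : List ℕ) (h₀ : l₀ ≠ [])
    (hmem : l₀ ++ [τm, s, t] ∈ SegEnd s t)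
    (hopt : ∀ l' ∈ SegEnd s t, V c β (l₀ ++ [τm, s, t]) ≤ V c β l') :
    l₀ ++ [τm, s] ∈ SegEnd τm s ∧
      ∀ l' ∈ SegEnd τm s, V c β (l₀ ++ [τm, s]) ≤ V c β l' := by
  obtain ⟨⟨hchain, hhead, _⟩, _⟩ := hmem
  have hsplit : l₀ ++ [τm, s, t] = (l₀ ++ [τm, s]) ++ [t] := by simp
  rw [hsplit] at hchain
  unfold List.Chain' at hchain; rw [List.isChain_append] at hchain
  obtain ⟨hc1, _, hst⟩ := hchain
  have hlast : (l₀ ++ [τm, s]).getLast? = some s := by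
    rw [show l₀ ++ [τm, s] = (l₀ ++ [τm]) ++ [s] by simp]
    simp
  have hst' : s < t := hst s hlast t rfl
  obtain ⟨x, l₀', rfl⟩ := List.exists_cons_of_ne_nil h₀
  have hhead' : (x :: l₀' ++ [τm, s]).head? = some 1 := by
    simp only [List.cons_append, List.head?_cons] at hhead ⊢
    exact hhead
  refine ⟨⟨⟨hc1, hhead', hlast⟩, x :: l₀', rfl⟩, ?_⟩
  intro l' hl'
  obtain ⟨⟨hc', hh', hlast'⟩, l₁, rfl⟩ := hl'
  have hmem' : (l₁ ++ [τm, s]) ++ [t] ∈ SegEnd s t := by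
    refine ⟨⟨?_, ?_, ?_⟩, l₁ ++ [τm], by simp⟩
    · unfold List.Chain'; rw [List.isChain_append]
      exact ⟨hc', List.isChain_singleton t, by
        intro a ha b hb
        simp only [List.head?_cons, Option.mem_def, Option.some.injEq] at hb
        rw [hlast'] at ha
        simp only [Option.mem_def, Option.some.injEq] at ha
        subst ha; subst hb; exact hst'⟩
    · have hne : l₁ ++ [τm, s] ≠ [] := by simp
      obtain ⟨y, l₂, hy⟩ := List.exists_cons_of_ne_nil hne
      rw [hy] at hh' ⊢
      simpa using hh'
    · rw [show (l₁ ++ [τm, s]) ++ [t] = (l₁ ++ [τm, s]) ++ [t] from rfl]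
      simp
  have h1 := hopt _ hmem'
  have e1 : V c β ((x :: l₀') ++ [τm, s, t]) =
      V c β ((x :: l₀') ++ [τm, s]) + (c τm s t + β) := V_app c β _ τm s t
  have e2 : V c β ((l₁ ++ [τm, s]) ++ [t]) =
      V c β (l₁ ++ [τm, s]) + (c τm s t + β) := by
    rw [show (l₁ ++ [τm, s]) ++ [t] = l₁ ++ [τm, s, t] by simp]
    exact V_app c β l₁ τm s t
  rw [e1, e2] at h1
  linarith
end

section
/- The global optimum of the penalized segmentation problem equals the minimum over the last interior change point: min over all segmentations 𝒯 of {1,…,T} with at least one interior change point of V(𝒯) equals min_{1 < s < T} G(s,T), where G satisfies the Bellman recursion with G(1,j) = 0. -/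
lemma decomp (T : ℕ) (l : List ℕ) (hl : l ∈ SegSet T) (h3 : 3 ≤ l.length) :
    ∃ s, 1 < s ∧ s < T ∧ l ∈ SegEnd s T := by
  obtain ⟨hc, hh, hg⟩ := hl
  have hlen : 3 ≤ l.reverse.length := by simpa using h3
  rcases hr : l.reverse with _ | ⟨a, _ | ⟨b, r⟩⟩ <;> rw [hr] at hlen <;> try simp at hlen
  have hl' : l = r.reverse ++ [b, a] := by
    have := congrArg List.reverse hr
    simpa using this
  have ha : a = T := by
    have : l.reverse.head? = some T := by rw [List.head?_reverse]; exact hg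
    rw [hr] at this; simpa using this
  have hp : l.Pairwise (· < ·) := List.isChain_iff_pairwise.mp hc
  have hba : b < a := by
    have hsuf : [b, a] <:+ l := ⟨r.reverse, hl'.symm⟩
    have hsub : List.Sublist [b, a] l := hsuf.sublist
    have := hp.sublist hsub
    simpa using this
  rcases hr' : r.reverse with _ | ⟨x, r'⟩
  · rw [hr'] at hl'; simp [hl'] at h3
  · rw [hr'] at hl'
    have hx : x = 1 := by
      rw [hl'] at hh; simpa using hh
    subst hx
    rw [hl'] at hp
    have h1b : 1 < b := by
      have := List.rel_of_pairwise_cons hp (show b ∈ r' ++ [b, a] by simp)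
      exact this
    exact ⟨b, h1b, ha ▸ hba, ⟨⟨hc, hh, hg⟩, 1 :: r', by rw [hl', ha]⟩⟩

lemma segEnd_subset (s T : ℕ) (hs : 1 < s) :
    SegEnd s T ⊆ {l ∈ SegSet T | 3 ≤ l.length} := by
  rintro l ⟨hmem, l₀, rfl⟩
  refine ⟨hmem, ?_⟩
  rcases l₀ with _ | ⟨x, t⟩
  · exfalso
    have := hmem.2.1
    simp at this
    omega
  · simp

/-- The global optimum over segmentations with at least one interior change
point equals `min_{1 < s < T} G(s,T)`. -/
theorem stmt4 (T : ℕ) (hT : 3 ≤ T) (c : ℕ → ℕ → ℕ → ℝ) (β : ℝ)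
    (G : ℕ → ℕ → ℝ)
    (hG : ∀ s, 1 < s → s < T → IsLeast (V c β '' SegEnd s T) (G s T)) :
    IsLeast (V c β '' {l ∈ SegSet T | 3 ≤ l.length})
      ((Finset.Ioo 1 T).inf' ⟨2, Finset.mem_Ioo.mpr (by omega)⟩
        (fun s => G s T)) := by
  constructor
  · have hne : (Finset.Ioo 1 T).Nonempty := ⟨2, Finset.mem_Ioo.mpr (by omega)⟩
    obtain ⟨s₀, hs₀, heq⟩ := Finset.exists_mem_eq_inf' hne (fun s => G s T)
    rw [heq]
    rw [Finset.mem_Ioo] at hs₀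
    obtain ⟨l, hl, hVl⟩ := (hG s₀ hs₀.1 hs₀.2).1
    exact ⟨l, segEnd_subset s₀ T hs₀.1 hl, hVl⟩
  · rintro x ⟨l, ⟨hmem, hlen⟩, rfl⟩
    obtain ⟨s, h1s, hsT, hend⟩ := decomp T l hmem hlen
    calc (Finset.Ioo 1 T).inf' _ (fun s => G s T) ≤ G s T :=
          Finset.inf'_le _ (Finset.mem_Ioo.mpr ⟨h1s, hsT⟩)
      _ ≤ V c β l := (hG s h1s hsT).2 ⟨l, hend, rfl⟩
end
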